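/- (Partial second level integral.) Let γ₁ denote the standard Gaussian measure on ℝ, let C ≥ 0 and ν ≥ 0, and set a = √(2ν). Then ∫_ℝ exp( −C( g² + φ̄_ν(g) ) ) dγ₁(g) = (1/2)·e^{Cν} + e^{−Cν}·( 1 − Φ(a) ) + e^{Cν}·(1 + 2C)^{−1/2}·( Φ( a·√(1+2C) ) − 1/2 ). -/

import Mathlib

open MeasureTheory ProbabilityTheory

/-- `sgn t = 1` if `t > 0` and `sgn t = −1` if `t ≤ 0`. -/
noncomputable def sgn (t : ℝ) : ℝ := if 0 < t then 1 else -1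

/-- `φ̄_ν(u)`: the per-coordinate minimum of `z² − 2uz + ν·sgn(z)`. -/
noncomputable def phibar (ν u : ℝ) : ℝ :=
  if u ≤ 0 then -u ^ 2 - ν else if u ≤ Real.sqrt (2 * ν) then -ν else -u ^ 2 + ν

open Real Set
open scoped NNReal ENNReal
lemma integral_gaussianReal_pdf {v : ℝ≥0} (hv : v ≠ 0) (f : ℝ → ℝ) :
    ∫ x, f x ∂(gaussianReal 0 v) = ∫ x, gaussianPDFReal 0 v x * f x := by
  rw [gaussianReal_of_var_ne_zero _ hv]
  have h : gaussianPDF 0 v = fun x => ((Real.toNNReal (gaussianPDFReal 0 v x) : ℝ≥0) : ℝ≥0∞) :=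
    rfl
  rw [h, integral_withDensity_eq_integral_smul
    ((measurable_gaussianPDFReal 0 v).real_toNNReal) f]
  refine integral_congr_ae (ae_of_all _ fun x => ?_)
  simp [NNReal.smul_def, Real.coe_toNNReal _ (gaussianPDFReal_nonneg 0 v x)]

lemma setIntegral_gauss_pdf {v : ℝ≥0} (hv : v ≠ 0) (s : Set ℝ) :
    ∫ x in s, gaussianPDFReal 0 v x = ((gaussianReal 0 v) s).toReal := by
  rw [gaussianReal_apply_eq_integral 0 hv s,
    ENNReal.toReal_ofReal (integral_nonneg fun x => gaussianPDFReal_nonneg 0 v x)]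

lemma gauss_Iic_zero : ((gaussianReal 0 1) (Iic 0)).toReal = 1 / 2 := by
  have hmap : (gaussianReal 0 1).map (fun x => (-1 : ℝ) * x) = gaussianReal 0 1 := by
    rw [gaussianReal_map_const_mul (-1 : ℝ)]
    have h1 : ((-1 : ℝ)) * 0 = 0 := by norm_num
    have h2 : (⟨(-1:ℝ)^2, sq_nonneg _⟩ : ℝ≥0) * 1 = 1 := by ext; norm_num
    rw [h1]; congr 1
  have h1 : (gaussianReal 0 1) (Iic 0) = (gaussianReal 0 1) (Ici 0) := by
    conv_lhs => rw [← hmap]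
    rw [Measure.map_apply (measurable_const_mul _) measurableSet_Iic]
    congr 1
    ext x
    simp
  have h0 : (gaussianReal 0 1) {(0:ℝ)} = 0 :=
    gaussianReal_absolutelyContinuous 0 one_ne_zero (measure_singleton 0)
  have h2 : (gaussianReal 0 1) (Ici 0) = (gaussianReal 0 1) (Ioi 0) := by
    refine le_antisymm ?_ (measure_mono Ioi_subset_Ici_self)
    rw [← Ioi_union_left]
    calc (gaussianReal 0 1) (Ioi 0 ∪ {0})
        ≤ (gaussianReal 0 1) (Ioi 0) + (gaussianReal 0 1) {0} := measure_union_le _ _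
      _ = (gaussianReal 0 1) (Ioi 0) := by rw [h0, add_zero]
  have hsum : (gaussianReal 0 1) (Iic 0) + (gaussianReal 0 1) (Ioi 0) = 1 := by
    rw [← compl_Iic, measure_add_measure_compl measurableSet_Iic, measure_univ]
  have hIic := measure_ne_top (gaussianReal 0 1) (Iic 0)
  have hIoi := measure_ne_top (gaussianReal 0 1) (Ioi 0)
  have hs : ((gaussianReal 0 1) (Iic 0)).toReal + ((gaussianReal 0 1) (Ioi 0)).toReal = 1 := by
    rw [← ENNReal.toReal_add hIic hIoi, hsum, ENNReal.toReal_one]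
  have he : ((gaussianReal 0 1) (Iic 0)).toReal = ((gaussianReal 0 1) (Ioi 0)).toReal := by
    rw [h1, h2]
  linarith

lemma pdf_mul_exp (C : ℝ) (hC : 0 ≤ C) (x : ℝ) :
    gaussianPDFReal 0 1 x * Real.exp (-(C * x ^ 2))
      = (Real.sqrt (1 + 2 * C))⁻¹
        * gaussianPDFReal 0 ((1 + 2 * C)⁻¹).toNNReal x := by
  have hk : (0:ℝ) < 1 + 2 * C := by linarith
  have hco : (((1 + 2 * C)⁻¹).toNNReal : ℝ) = (1 + 2 * C)⁻¹ :=
    Real.coe_toNNReal _ (by positivity)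
  have hsq : (0:ℝ) < Real.sqrt (1 + 2 * C) := Real.sqrt_pos.2 hk
  have h1 : gaussianPDFReal 0 1 x = (Real.sqrt (2 * π))⁻¹ * Real.exp (-x ^ 2 / 2) := by
    unfold gaussianPDFReal
    norm_num
  have h2 : gaussianPDFReal 0 ((1 + 2 * C)⁻¹).toNNReal x
      = Real.sqrt (1 + 2 * C) * (Real.sqrt (2 * π))⁻¹
        * Real.exp (-((1 + 2 * C) * x ^ 2) / 2) := by
    unfold gaussianPDFReal
    rw [hco, show (2 * π * (1 + 2 * C)⁻¹) = (2 * π) / (1 + 2 * C) by ring,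
      Real.sqrt_div (by positivity) (1 + 2 * C)]
    have hpi : (0:ℝ) < Real.sqrt (2 * π) := Real.sqrt_pos.2 (by positivity)
    congr 1
    · rw [inv_div, div_eq_mul_inv]
    · congr 1
      rw [sub_zero]
      field_simp
  rw [h1, h2]
  rw [mul_assoc, ← Real.exp_add, ← mul_assoc, ← mul_assoc, inv_mul_cancel₀ (ne_of_gt hsq),
    one_mul]
  congr 1
  field_simp
  ring

lemma gauss_Ioc_scaled (C : ℝ) (hC : 0 ≤ C) (a : ℝ) (ha : 0 ≤ a) :
    ((gaussianReal 0 ((1 + 2 * C)⁻¹).toNNReal) (Ioc 0 a)).toReal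
      = ((gaussianReal 0 1) (Iic (a * Real.sqrt (1 + 2 * C)))).toReal
        - ((gaussianReal 0 1) (Iic 0)).toReal := by
  have hk : (0:ℝ) < 1 + 2 * C := by linarith
  set c : ℝ := (Real.sqrt (1 + 2 * C))⁻¹ with hcdef
  have hc : 0 < c := by positivity
  have hmap : (gaussianReal 0 1).map (fun x => c * x)
      = gaussianReal 0 ((1 + 2 * C)⁻¹).toNNReal := by
    rw [gaussianReal_map_const_mul c]
    have h1 : c * 0 = 0 := by ring
    have h2 : (⟨c ^ 2, sq_nonneg _⟩ : ℝ≥0) * 1 = ((1 + 2 * C)⁻¹).toNNReal := by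
      rw [mul_one]
      refine NNReal.coe_injective ?_
      rw [Real.coe_toNNReal _ (by positivity)]
      show c ^ 2 = (1 + 2 * C)⁻¹
      rw [hcdef, inv_pow, Real.sq_sqrt hk.le]
    rw [h1]; congr 1
  have hpre : (gaussianReal 0 ((1 + 2 * C)⁻¹).toNNReal) (Ioc 0 a)
      = (gaussianReal 0 1) (Iic (a * Real.sqrt (1 + 2 * C)) \ Iic 0) := by
    rw [← hmap, Measure.map_apply (measurable_const_mul c) measurableSet_Ioc,
      Set.preimage_const_mul_Ioc₀ 0 a hc]
    congr 1
    rw [Iic_sdiff_Iic, zero_div, hcdef, div_eq_mul_inv, inv_inv]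
  rw [hpre, measure_diff (Iic_subset_Iic.2 (by positivity)) measurableSet_Iic.nullMeasurableSet
    (measure_ne_top _ _),
    ENNReal.toReal_sub_of_le (measure_mono (Iic_subset_Iic.2 (by positivity)))
    (measure_ne_top _ _)]


/-- Partial second level integral: with `a = √(2ν)` and `Φ` the standard Gaussian CDF,
`∫ e^{−C(g² + φ̄_ν(g))} dγ₁(g)
  = (1/2)e^{Cν} + e^{−Cν}(1 − Φ(a)) + e^{Cν}(1+2C)^{−1/2}(Φ(a√(1+2C)) − 1/2)`. -/
theorem partial_second_level_integral (C ν : ℝ) (hC : 0 ≤ C) (hν : 0 ≤ ν)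
    (a : ℝ) (ha : a = Real.sqrt (2 * ν))
    (Φ : ℝ → ℝ) (hΦ : ∀ x, Φ x = ((gaussianReal 0 1) (Set.Iic x)).toReal) :
    ∫ g, Real.exp (-(C * (g ^ 2 + phibar ν g))) ∂(gaussianReal 0 1)
      = (1 / 2) * Real.exp (C * ν) + Real.exp (-(C * ν)) * (1 - Φ a)
        + Real.exp (C * ν) * (Real.sqrt (1 + 2 * C))⁻¹
          * (Φ (a * Real.sqrt (1 + 2 * C)) - 1 / 2) := by
  have hk : (0:ℝ) < 1 + 2 * C := by linarith
  have ha0 : 0 ≤ a := ha ▸ Real.sqrt_nonneg _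
  have hvne : ((1 + 2 * C)⁻¹).toNNReal ≠ 0 := by
    rw [ne_eq, Real.toNNReal_eq_zero, not_le]
    positivity
  set F : ℝ → ℝ := fun x => gaussianPDFReal 0 1 x * Real.exp (-(C * (x ^ 2 + phibar ν x)))
    with hF
  have h₁ : EqOn F (fun x => Real.exp (C * ν) * gaussianPDFReal 0 1 x) (Iic 0) := by
    intro x hx
    simp only [hF, phibar, if_pos (mem_Iic.1 hx)]
    rw [show -(C * (x ^ 2 + (-x ^ 2 - ν))) = C * ν by ring]
    ring
  have h₂ : EqOn F (fun x => Real.exp (C * ν) * ((Real.sqrt (1 + 2 * C))⁻¹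
      * gaussianPDFReal 0 ((1 + 2 * C)⁻¹).toNNReal x)) (Ioc 0 a) := by
    intro x hx
    simp only [hF, phibar, if_neg (not_le.2 hx.1), if_pos (ha ▸ hx.2)]
    rw [show -(C * (x ^ 2 + -ν)) = -(C * x ^ 2) + C * ν by ring, Real.exp_add,
      ← mul_assoc, pdf_mul_exp C hC x]
    ring
  have h₃ : EqOn F (fun x => Real.exp (-(C * ν)) * gaussianPDFReal 0 1 x) (Ioi a) := by
    intro x hx
    have hx0 : (0:ℝ) < x := lt_of_le_of_lt ha0 hx
    simp only [hF, phibar, if_neg (not_le.2 hx0), if_neg (not_le.2 (ha ▸ mem_Ioi.1 hx))]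
    rw [show -(C * (x ^ 2 + (-x ^ 2 + ν))) = -(C * ν) by ring]
    ring
  have I₁ : IntegrableOn F (Iic 0) :=
    (((integrable_gaussianPDFReal 0 1).const_mul _).integrableOn).congr_fun
      h₁.symm measurableSet_Iic
  have I₂ : IntegrableOn F (Ioc 0 a) :=
    ((((integrable_gaussianPDFReal 0 _).const_mul _).const_mul _).integrableOn).congr_fun
      h₂.symm measurableSet_Ioc
  have I₃ : IntegrableOn F (Ioi a) :=
    (((integrable_gaussianPDFReal 0 1).const_mul _).integrableOn).congr_fun
      h₃.symm measurableSet_Ioi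
  have hU : (Iic (0:ℝ)) ∪ (Ioc 0 a ∪ Ioi a) = univ := by
    rw [Ioc_union_Ioi_eq_Ioi ha0, Iic_union_Ioi]
  have hdisj : Disjoint (Iic (0:ℝ)) (Ioc 0 a ∪ Ioi a) :=
    (Iic_disjoint_Ioi le_rfl).mono_right
      (union_subset Ioc_subset_Ioi_self (Ioi_subset_Ioi ha0))
  have hdisj2 : Disjoint (Ioc (0:ℝ) a) (Ioi a) := Ioc_disjoint_Ioi le_rfl
  rw [integral_gaussianReal_pdf one_ne_zero]
  have hmain : (∫ x, gaussianPDFReal 0 1 x * Real.exp (-(C * (x ^ 2 + phibar ν x))))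
      = (∫ x in Iic 0, F x) + ((∫ x in Ioc 0 a, F x) + (∫ x in Ioi a, F x)) := by
    rw [← setIntegral_union hdisj2 measurableSet_Ioi I₂ I₃,
      ← setIntegral_union hdisj (measurableSet_Ioc.union measurableSet_Ioi) I₁ (I₂.union I₃),
      hU, setIntegral_univ]
  rw [hmain]
  have e₁ : (∫ x in Iic 0, F x) = Real.exp (C * ν) * (1 / 2) := by
    rw [setIntegral_congr_fun measurableSet_Iic h₁, MeasureTheory.integral_const_mul,
      setIntegral_gauss_pdf one_ne_zero, gauss_Iic_zero]
  have e₂ : (∫ x in Ioc 0 a, F x)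
      = Real.exp (C * ν) * ((Real.sqrt (1 + 2 * C))⁻¹
        * (Φ (a * Real.sqrt (1 + 2 * C)) - 1 / 2)) := by
    rw [setIntegral_congr_fun measurableSet_Ioc h₂, MeasureTheory.integral_const_mul, MeasureTheory.integral_const_mul,
      setIntegral_gauss_pdf hvne, gauss_Ioc_scaled C hC a ha0, hΦ, gauss_Iic_zero]
  have e₃ : (∫ x in Ioi a, F x) = Real.exp (-(C * ν)) * (1 - Φ a) := by
    rw [setIntegral_congr_fun measurableSet_Ioi h₃, MeasureTheory.integral_const_mul,
      setIntegral_gauss_pdf one_ne_zero]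
    congr 1
    have hsum : ((gaussianReal 0 1) (Iic a)).toReal + ((gaussianReal 0 1) (Ioi a)).toReal
        = 1 := by
      rw [← ENNReal.toReal_add (measure_ne_top _ _) (measure_ne_top _ _), ← compl_Iic,
        measure_add_measure_compl measurableSet_Iic, measure_univ, ENNReal.toReal_one]
    rw [hΦ]
    linarith
  rw [e₁, e₂, e₃]
  ring
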